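/- For every integer h ≥ 1 and every odd positive integer n, the cyclotomic polynomial Φ_n(t) does not divide p_h(t) = t^{4h} − t^{4h−1} + t^{2h} − t + 1 in ℤ[t]. -/

import Mathlib

open Polynomial Complex Real

/-- For any `c` and `n > 0` there is `k` coprime to `n` with `c * k ≡ gcd c n [MOD n]`. -/
lemma exists_unit_mul_modEq (c n : ℕ) (hc : 0 < c) (hn : 0 < n) :
    ∃ k : ℕ, k.Coprime n ∧ c * k ≡ Nat.gcd c n [MOD n] := by
  haveI : NeZero n := ⟨hn.ne'⟩
  set g := Nat.gcd c n with hg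
  have hg0 : 0 < g := Nat.gcd_pos_of_pos_left _ hc
  set a := n / g with ha
  have hgdvdn : g ∣ n := Nat.gcd_dvd_right _ _
  have hgdvdc : g ∣ c := Nat.gcd_dvd_left _ _
  have hga : g * a = n := Nat.mul_div_cancel' hgdvdn
  have hadvd : a ∣ n := ⟨g, by rw [mul_comm]; exact hga.symm⟩
  set m := c / g with hm
  have hgm : g * m = c := Nat.mul_div_cancel' hgdvdc
  have hcop : m.Coprime a := Nat.coprime_div_gcd_div_gcd hg0
  obtain ⟨U, hU⟩ := ZMod.unitsMap_surjective hadvd (ZMod.unitOfCoprime m hcop)⁻¹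
  refine ⟨(U : ZMod n).val, ZMod.val_coe_unit_coprime U, ?_⟩
  set k := (U : ZMod n).val with hk
  have hmk : m * k ≡ 1 [MOD a] := by
    have h1 : ((m * k : ℕ) : ZMod a) = ((1 : ℕ) : ZMod a) := by
      push_cast
      have h2 : ((k : ℕ) : ZMod a) = ZMod.castHom hadvd (ZMod a) ((k : ℕ) : ZMod n) := by
        simp
      have h3 : ((k : ℕ) : ZMod n) = (U : ZMod n) := by
        rw [hk, ZMod.natCast_val, ZMod.cast_id]
      have h4 : (ZMod.castHom hadvd (ZMod a) (U : ZMod n)) =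
          ((ZMod.unitOfCoprime m hcop)⁻¹ : (ZMod a)ˣ) := by
        rw [← hU]; rfl
      rw [h2, h3, h4]
      have : ((ZMod.unitOfCoprime m hcop : (ZMod a)ˣ) : ZMod a) = (m : ZMod a) :=
        ZMod.coe_unitOfCoprime m hcop
      rw [← this, ← Units.val_mul, mul_inv_cancel, Units.val_one]
    exact (ZMod.natCast_eq_natCast_iff _ _ _).mp h1
  have := hmk.mul_left' (c := g)
  rw [← mul_assoc, hgm, mul_one, hga] at this
  exact this

lemma odd_pow_ne_neg_one {w : ℂ} {n j : ℕ} (hodd : Odd n) (hwn : w ^ n = 1)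
    (hj : w ^ j = -1) : False := by
  have h1 : ((-1 : ℂ)) ^ n = -1 := hodd.neg_one_pow
  have h2 : ((w ^ j) ^ n) = (w ^ n) ^ j := by rw [← pow_mul, ← pow_mul, mul_comm]
  rw [hj, hwn, one_pow, h1] at h2
  norm_num at h2

theorem stmt_4 (h : ℕ) (hh : 1 ≤ h) (n : ℕ) (hn : 0 < n) (hodd : Odd n) :
    ¬ (cyclotomic n ℤ ∣
      (X : ℤ[X]) ^ (4 * h) - X ^ (4 * h - 1) + X ^ (2 * h) - X + 1) := by
  intro hdvd
  haveI : NeZero n := ⟨hn.ne'⟩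
  haveI : NeZero (n : ℂ) := ⟨by exact_mod_cast (Nat.cast_ne_zero (R := ℂ)).mpr hn.ne'⟩
  have hζ := Complex.isPrimitiveRoot_exp n hn.ne'
  set ζ : ℂ := Complex.exp (2 * π * I / n) with hζdef
  obtain ⟨k, hk, hkmod⟩ := exists_unit_mul_modEq (2 * h) n (by omega) hn
  set g := Nat.gcd (2 * h) n with hgdef
  set a := n / g with hadef
  have hgdvdn : g ∣ n := Nat.gcd_dvd_right _ _
  have hga : g * a = n := Nat.mul_div_cancel' hgdvdn
  have ha0 : 0 < a := by
    rcases Nat.eq_zero_or_pos a with h0 | h0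
    · rw [h0, mul_zero] at hga; omega
    · exact h0
  have haodd : Odd a := by
    rcases Nat.even_or_odd a with he | ho
    · exfalso
      have : Even n := by rw [← hga]; exact he.mul_left g
      exact (Nat.not_even_iff_odd.mpr hodd) this
    · exact ho
  -- ζ^k is a primitive n-th root, hence a root of the polynomial
  have hζ'' : IsPrimitiveRoot (ζ ^ k) n := hζ.pow_of_coprime k hk
  have hdvdC : cyclotomic n ℂ ∣
      Polynomial.map (Int.castRingHom ℂ)
        ((X : ℤ[X]) ^ (4 * h) - X ^ (4 * h - 1) + X ^ (2 * h) - X + 1) := by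
    have := Polynomial.map_dvd (Int.castRingHom ℂ) hdvd
    rwa [map_cyclotomic] at this
  have hroot : (ζ ^ k) ^ (4 * h) - (ζ ^ k) ^ (4 * h - 1) + (ζ ^ k) ^ (2 * h)
      - ζ ^ k + 1 = 0 := by
    have h1 : IsRoot (cyclotomic n ℂ) (ζ ^ k) := (isRoot_cyclotomic_iff).mpr hζ''
    have h2 := h1.dvd hdvdC
    simpa [IsRoot] using h2
  obtain ⟨v, hvdef⟩ : ∃ x : ℂ, x = ζ ^ k := ⟨_, rfl⟩
  rw [← hvdef] at hroot hζ''
  obtain ⟨w, hwdef⟩ : ∃ x : ℂ, x = v ^ (2 * h - 1) := ⟨_, rfl⟩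
  obtain ⟨u, hudef⟩ : ∃ x : ℂ, x = v ^ (2 * h) := ⟨_, rfl⟩
  rw [← hudef] at hroot
  have hζne : ζ ≠ 0 := Complex.exp_ne_zero _
  have hvne : v ≠ 0 := by rw [hvdef]; exact pow_ne_zero _ hζne
  have hwne : w ≠ 0 := by rw [hwdef]; exact pow_ne_zero _ hvne
  have hune : u ≠ 0 := by rw [hudef]; exact pow_ne_zero _ hvne
  have huwv : u = w * v := by rw [hudef, hwdef, ← pow_succ]; congr 1; omega
  have h4h : v ^ (4 * h) = u * u := by rw [hudef, ← pow_add]; congr 1; omega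
  have h4h1 : v ^ (4 * h - 1) = u * w := by rw [hudef, hwdef, ← pow_add]; congr 1; omega
  have hr : u * u - u * w + u - v + 1 = 0 := by
    rw [← h4h, ← h4h1]; exact hroot
  have key : u * u * w + w + u * w = u * w * w + u := by
    linear_combination w * hr - huwv
  have E : u + u⁻¹ + 1 = w + w⁻¹ := by
    field_simp
    linear_combination key
  -- norms are 1
  have hvn1 : v ^ n = 1 := hζ''.pow_eq_one
  have hvabs : ‖v‖ = 1 := Complex.norm_eq_one_of_pow_eq_one hvn1 hn.ne'
  have hwabs : ‖w‖ = 1 := by rw [hwdef, norm_pow, hvabs, one_pow]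
  have huabs : ‖u‖ = 1 := by rw [hudef, norm_pow, hvabs, one_pow]
  -- real parts
  have hEre : 2 * u.re + 1 = 2 * w.re := by
    have hE2 := congrArg Complex.re E
    rw [Complex.inv_eq_conj huabs, Complex.inv_eq_conj hwabs] at hE2
    simp [Complex.add_re, Complex.conj_re, Complex.one_re] at hE2
    linarith
  have hwre : w.re ≤ 1 := by
    have := Complex.re_le_norm w
    linarith [this, hwabs.le]
  have hure : u.re ≤ 1 / 2 := by linarith
  -- u = ζ ^ g
  have hu_eq : u = ζ ^ g := by
    rw [hudef, hvdef, ← pow_mul]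
    have horder : orderOf ζ = n := (hζ.eq_orderOf).symm
    have h1 : k * (2 * h) % n = g % n := by rw [mul_comm]; exact hkmod
    rw [← pow_mod_orderOf, horder, h1, ← horder, pow_mod_orderOf]
  have hua : u ^ a = 1 := by
    rw [hu_eq, ← pow_mul, hga, hζ.pow_eq_one]
  have hu1 : u ≠ 1 := by
    intro h1; rw [h1] at hure; norm_num at hure
  have hwn : w ^ n = 1 := by
    rw [hwdef, ← pow_mul, mul_comm, pow_mul, hvn1, one_pow]
  -- case analysis on a
  obtain ⟨t, ht⟩ := haodd
  have hacase : a = 1 ∨ a = 3 ∨ a = 5 ∨ 7 ≤ a := by omega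
  rcases hacase with h1 | h3 | h5 | h7
  · rw [h1, pow_one] at hua; exact hu1 hua
  · -- a = 3 : w^2 = -1
    rw [h3] at hua
    have hsum : u ^ 2 + u + 1 = 0 := by
      have hfac : (u - 1) * (u ^ 2 + u + 1) = 0 := by linear_combination hua
      rcases mul_eq_zero.mp hfac with hc | hc
      · exact absurd (by linear_combination hc) hu1
      · exact hc
    have huinv : u⁻¹ = u ^ 2 := by
      apply inv_eq_of_mul_eq_one_right
      linear_combination hua
    have hw0 : w + w⁻¹ = 0 := by
      rw [← E, huinv]; linear_combination hsum
    have hwsq : w ^ 2 = -1 := by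
      have h2 : w * (w + w⁻¹) = w ^ 2 + 1 := by
        field_simp
      rw [hw0, mul_zero] at h2
      linear_combination -h2
    exact odd_pow_ne_neg_one hodd hwn hwsq
  · -- a = 5 : w^5 = -1
    rw [h5] at hua
    have hsum : u ^ 4 + u ^ 3 + u ^ 2 + u + 1 = 0 := by
      have hfac : (u - 1) * (u ^ 4 + u ^ 3 + u ^ 2 + u + 1) = 0 := by
        linear_combination hua
      rcases mul_eq_zero.mp hfac with hc | hc
      · exact absurd (by linear_combination hc) hu1
      · exact hc
    have huinv : u⁻¹ = u ^ 4 := by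
      apply inv_eq_of_mul_eq_one_right
      linear_combination hua
    have hEd : w + w⁻¹ = u + u ^ 4 + 1 := by
      rw [← E, huinv]
    have hd2 : (w + w⁻¹) ^ 2 = (w + w⁻¹) + 1 := by
      rw [hEd]
      linear_combination hsum + (u ^ 3 + 2) * hua
    have hid : w ^ 5 + (w ^ 5)⁻¹ =
        (w + w⁻¹) ^ 5 - 5 * (w + w⁻¹) ^ 3 + 5 * (w + w⁻¹) := by
      field_simp
      ring
    have h5val : w ^ 5 + (w ^ 5)⁻¹ = -2 := by
      rw [hid]
      linear_combination ((w + w⁻¹) ^ 3 + (w + w⁻¹) ^ 2 - 3 * (w + w⁻¹) - 2) * hd2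
    have hw5 : w ^ 5 = -1 := by
      have hw5ne : w ^ 5 ≠ 0 := pow_ne_zero _ hwne
      have hsq : (w ^ 5 + 1) ^ 2 = 0 := by
        field_simp at h5val
        linear_combination h5val
      have := sq_eq_zero_iff.mp hsq
      linear_combination this
    exact odd_pow_ne_neg_one hodd hwn hw5
  · -- a ≥ 7 : cos(2π/a) > 1/2
    have haR : (0 : ℝ) < (a : ℝ) := by exact_mod_cast ha0
    have hu_exp : u = Complex.exp ((2 * π / (a : ℝ) : ℝ) * I) := by
      rw [hu_eq, hζdef, ← Complex.exp_nat_mul]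
      congr 1
      have hgaC : (g : ℂ) * (a : ℂ) = (n : ℂ) := by exact_mod_cast congrArg (Nat.cast : ℕ → ℂ) hga
      have hnC : (n : ℂ) ≠ 0 := NeZero.ne _
      have haC : (a : ℂ) ≠ 0 := by
        intro h0
        rw [h0, mul_zero] at hgaC
        exact hnC hgaC.symm
      push_cast
      field_simp
      linear_combination hgaC
    have hure2 : u.re = Real.cos (2 * π / (a : ℝ)) := by
      rw [hu_exp, Complex.exp_ofReal_mul_I_re]
    have hcos : 1 / 2 < Real.cos (2 * π / (a : ℝ)) := by
      have hπ := Real.pi_pos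
      have hx0 : (0 : ℝ) ≤ 2 * π / a := by positivity
      have hxy : 2 * π / (a : ℝ) < π / 3 := by
        rw [div_lt_div_iff₀ haR (by norm_num)]
        have : (7 : ℝ) ≤ (a : ℝ) := by exact_mod_cast h7
        nlinarith
      have := Real.cos_lt_cos_of_nonneg_of_le_pi hx0 (by linarith) hxy
      rw [Real.cos_pi_div_three] at this
      linarith
    rw [hure2] at hure
    linarith
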